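/- arXiv:2005.03936 — 4 statements merged into one kernel-verified Lean document; each statement's English description precedes it below -/
import Mathlib

section
/- The map f : ℓ² → ℓ² defined by f(u₁,u₂,u₃,...) = (u₁²+u₂², u₃, u₄, ...) is a proper map, i.e., the preimage of every compact subset of ℓ² is compact. -/
open Filter Topology Bornology ENNReal

section helpers

lemma sq_summable (x : lp (fun _ : ℕ => ℝ) 2) : Summable fun n => (x n)^2 := by
  have := (lp.memℓp x).summable (p := 2) (by norm_num)
  simpa [Real.rpow_natCast, Real.norm_eq_abs, sq_abs] using this

lemma norm_sq_eq (x : lp (fun _ : ℕ => ℝ) 2) : ‖x‖^2 = ∑' n, (x n)^2 := by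
  have := lp.norm_rpow_eq_tsum (p := 2) (by norm_num) x
  simpa [Real.rpow_natCast, Real.norm_eq_abs, sq_abs] using this

lemma norm_sq_split1 (x : lp (fun _ : ℕ => ℝ) 2) :
    ‖x‖^2 = (x 0)^2 + ∑' n, (x (n+1))^2 := by
  rw [norm_sq_eq, Summable.tsum_eq_zero_add (sq_summable x)]

lemma norm_sq_split2 (x : lp (fun _ : ℕ => ℝ) 2) :
    ‖x‖^2 = (x 0)^2 + (x 1)^2 + ∑' n, (x (n+2))^2 := by
  have h1 : Summable fun n => (x (n+1))^2 := (summable_nat_add_iff 1).2 (sq_summable x)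
  rw [norm_sq_split1, Summable.tsum_eq_zero_add h1, ← add_assoc]

lemma tail1_le (x : lp (fun _ : ℕ => ℝ) 2) : ∑' n, (x (n+1))^2 ≤ ‖x‖^2 := by
  rw [norm_sq_split1]; nlinarith [sq_nonneg (x 0)]

lemma tail2_le (x : lp (fun _ : ℕ => ℝ) 2) : ∑' n, (x (n+2))^2 ≤ ‖x‖^2 := by
  rw [norm_sq_split2]; nlinarith [sq_nonneg (x 0), sq_nonneg (x 1)]

lemma tendsto_of_norm_sq_le {u : ℕ → lp (fun _ : ℕ => ℝ) 2} {l : lp (fun _ : ℕ => ℝ) 2}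
    {a : ℕ → ℝ} (h : ∀ k, ‖u k - l‖^2 ≤ a k) (ha : Tendsto a atTop (𝓝 0)) :
    Tendsto u atTop (𝓝 l) := by
  rw [tendsto_iff_norm_sub_tendsto_zero]
  have h0 : ∀ k, ‖u k - l‖ ≤ Real.sqrt (a k) := fun k => by
    rw [show ‖u k - l‖ = Real.sqrt (‖u k - l‖^2) by rw [Real.sqrt_sq (norm_nonneg _)]]
    exact Real.sqrt_le_sqrt (h k)
  refine squeeze_zero (fun k => norm_nonneg _) h0 ?_
  have : Tendsto (fun k => Real.sqrt (a k)) atTop (𝓝 (Real.sqrt 0)) :=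
    (Real.continuous_sqrt.tendsto 0).comp ha
  simpa using this

lemma apply_sq_le (x : lp (fun _ : ℕ => ℝ) 2) (i : ℕ) : (x i)^2 ≤ ‖x‖^2 := by
  have := lp.norm_apply_le_norm (E := fun _ : ℕ => ℝ) (p := 2) (by norm_num) x i
  have h2 : |x i| ≤ ‖x‖ := by simpa [Real.norm_eq_abs] using this
  nlinarith [abs_nonneg (x i), le_abs_self (x i), neg_abs_le (x i)]

lemma tendsto_apply {w : ℕ → lp (fun _ : ℕ => ℝ) 2} {u : lp (fun _ : ℕ => ℝ) 2}
    (h : Tendsto w atTop (𝓝 u)) (i : ℕ) :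
    Tendsto (fun k => w k i) atTop (𝓝 (u i)) := by
  rw [tendsto_iff_norm_sub_tendsto_zero] at h ⊢
  refine squeeze_zero (fun k => norm_nonneg _) (fun k => ?_) h
  have := lp.norm_apply_le_norm (E := fun _ : ℕ => ℝ) (p := 2) (by norm_num) (w k - u) i
  simpa [lp.coeFn_sub, Pi.sub_apply] using this

/-- glue two reals in front of the shifted tail of `v` -/
def glueFun (a b : ℝ) (v : lp (fun _ : ℕ => ℝ) 2) : ℕ → ℝ
  | 0 => a
  | 1 => b
  | (n+2) => v (n+1)

noncomputable def glue (a b : ℝ) (v : lp (fun _ : ℕ => ℝ) 2) : lp (fun _ : ℕ => ℝ) 2 :=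
  ⟨glueFun a b v, by
    apply memℓp_gen
    have hs : Summable fun n : ℕ => ‖glueFun a b v (n + 2)‖ ^ (2 : ℝ≥0∞).toReal := by
      have : Summable fun n : ℕ => ‖v (n+1)‖ ^ (2 : ℝ≥0∞).toReal := by
        have := (summable_nat_add_iff 1).2 (sq_summable v)
        simpa [Real.norm_eq_abs, sq_abs, Real.rpow_natCast] using this
      exact this
    exact (summable_nat_add_iff 2).1 hs⟩

@[simp] lemma glue_apply0 (a b : ℝ) (v : lp (fun _ : ℕ => ℝ) 2) : glue a b v 0 = a := rfl
@[simp] lemma glue_apply1 (a b : ℝ) (v : lp (fun _ : ℕ => ℝ) 2) : glue a b v 1 = b := rfl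
@[simp] lemma glue_apply2 (a b : ℝ) (v : lp (fun _ : ℕ => ℝ) 2) (n : ℕ) :
    glue a b v (n + 2) = v (n + 1) := rfl

end helpers

set_option maxHeartbeats 1000000 in
set_option synthInstance.maxHeartbeats 1000000 in
/-- The map `f : ℓ² → ℓ²`, `f(u₁,u₂,u₃,…) = (u₁²+u₂², u₃, u₄, …)`, is proper. -/
theorem stmt0 (f : lp (fun _ : ℕ => ℝ) 2 → lp (fun _ : ℕ => ℝ) 2)
    (hf0 : ∀ u : lp (fun _ : ℕ => ℝ) 2, f u 0 = u 0 ^ 2 + u 1 ^ 2)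
    (hfs : ∀ u : lp (fun _ : ℕ => ℝ) 2, ∀ n : ℕ, f u (n + 1) = u (n + 2)) :
    IsProperMap f := by
  -- an estimate for ‖f w - f u‖²
  have key : ∀ w u : lp (fun _ : ℕ => ℝ) 2,
      ‖f w - f u‖^2 ≤ ((w 0)^2 + (w 1)^2 - (u 0)^2 - (u 1)^2)^2 + ‖w - u‖^2 := by
    intro w u
    have h1 : ‖f w - f u‖^2 = ((f w - f u) 0)^2 + ∑' n, ((f w - f u) (n+1))^2 :=
      norm_sq_split1 _
    have e0 : (f w - f u) 0 = (w 0)^2 + (w 1)^2 - (u 0)^2 - (u 1)^2 := by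
      simp [lp.coeFn_sub, Pi.sub_apply, hf0]; ring
    have es : ∀ n : ℕ, (f w - f u) (n+1) = (w - u) (n+2) := by
      intro n; simp [lp.coeFn_sub, Pi.sub_apply, hfs]
    have h2 : ∑' n, ((f w - f u) (n+1))^2 = ∑' n, ((w - u) (n+2))^2 := by
      congr 1; ext n; rw [es]
    rw [h1, e0, h2]
    have := tail2_le (w - u)
    linarith
  -- continuity of f
  have hcont : Continuous f := by
    rw [continuous_iff_seqContinuous]
    intro w u hw
    have h0 := tendsto_apply hw 0
    have h1 := tendsto_apply hw 1
    have hn : Tendsto (fun k => ‖w k - u‖) atTop (𝓝 0) :=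
      tendsto_iff_norm_sub_tendsto_zero.1 hw
    have hc : Tendsto (fun k => (w k 0)^2 + (w k 1)^2 - (u 0)^2 - (u 1)^2) atTop (𝓝 0) := by
      have := ((h0.pow 2).add (h1.pow 2)).sub_const ((u 0)^2 + (u 1)^2)
      simpa [sub_sub] using this
    have ha : Tendsto (fun k =>
        ((w k 0)^2 + (w k 1)^2 - (u 0)^2 - (u 1)^2)^2 + ‖w k - u‖^2) atTop (𝓝 0) := by
      have := (hc.pow 2).add (hn.pow 2)
      simpa using this
    exact tendsto_of_norm_sq_le (fun k => key (w k) u) ha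
  rw [isProperMap_iff_isCompact_preimage]
  refine ⟨hcont, fun K hK => ?_⟩
  -- sequential compactness of the preimage
  apply IsSeqCompact.isCompact
  intro u hu
  obtain ⟨v, hvK, φ₁, hφ₁, hv⟩ := hK.isSeqCompact (fun k => hu k)
  -- first coordinate of f (u k) tends to v 0
  have hfv0 : Tendsto (fun k => (u (φ₁ k) 0)^2 + (u (φ₁ k) 1)^2) atTop (𝓝 (v 0)) := by
    have := tendsto_apply hv 0
    simpa [Function.comp, hf0] using this
  -- boundedness of first two coordinates
  obtain ⟨C, hC⟩ : ∃ C, ∀ k, (u (φ₁ k) 0)^2 + (u (φ₁ k) 1)^2 ≤ C := by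
    obtain ⟨C, hC⟩ := hfv0.bddAbove_range
    exact ⟨C, fun k => hC ⟨k, rfl⟩⟩
  have hb0 : ∀ k, u (φ₁ k) 0 ∈ Set.Icc (-Real.sqrt C) (Real.sqrt C) := by
    intro k
    have h := hC k
    have h2 : (u (φ₁ k) 0)^2 ≤ C := by nlinarith [sq_nonneg (u (φ₁ k) 1)]
    constructor
    · nlinarith [Real.sq_sqrt (le_trans (by positivity) h2), Real.sqrt_nonneg C]
    · nlinarith [Real.sq_sqrt (le_trans (by positivity) h2), Real.sqrt_nonneg C]
  have hb1 : ∀ k, u (φ₁ k) 1 ∈ Set.Icc (-Real.sqrt C) (Real.sqrt C) := by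
    intro k
    have h := hC k
    have h2 : (u (φ₁ k) 1)^2 ≤ C := by nlinarith [sq_nonneg (u (φ₁ k) 0)]
    constructor
    · nlinarith [Real.sq_sqrt (le_trans (by positivity) h2), Real.sqrt_nonneg C]
    · nlinarith [Real.sq_sqrt (le_trans (by positivity) h2), Real.sqrt_nonneg C]
  obtain ⟨a, _, φ₂, hφ₂, ha⟩ :=
    tendsto_subseq_of_bounded (Metric.isBounded_Icc (-Real.sqrt C) (Real.sqrt C)) hb0
  obtain ⟨b, _, φ₃, hφ₃, hb⟩ :=
    tendsto_subseq_of_bounded (Metric.isBounded_Icc (-Real.sqrt C) (Real.sqrt C))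
      (fun k => hb1 (φ₂ k))
  set φ : ℕ → ℕ := φ₁ ∘ φ₂ ∘ φ₃ with hφdef
  have hφ : StrictMono φ := hφ₁.comp (hφ₂.comp hφ₃)
  -- the limit candidate
  set L := glue a b v with hL
  have hfuv : Tendsto (fun k => f (u (φ k))) atTop (𝓝 v) := by
    have := hv.comp (hφ₂.comp hφ₃).tendsto_atTop
    exact this
  -- convergence u ∘ φ → L
  have hconv : Tendsto (fun k => u (φ k)) atTop (𝓝 L) := by
    apply tendsto_of_norm_sq_le (a := fun k =>
      (u (φ k) 0 - a)^2 + (u (φ k) 1 - b)^2 + ‖f (u (φ k)) - v‖^2)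
    · intro k
      have hsplit := norm_sq_split2 (u (φ k) - L)
      have e0 : (u (φ k) - L) 0 = u (φ k) 0 - a := by
        simp [lp.coeFn_sub, Pi.sub_apply, hL]
      have e1 : (u (φ k) - L) 1 = u (φ k) 1 - b := by
        simp [lp.coeFn_sub, Pi.sub_apply, hL]
      have etail : ∑' n, ((u (φ k) - L) (n+2))^2 = ∑' n, ((f (u (φ k)) - v) (n+1))^2 := by
        congr 1; ext n
        simp [lp.coeFn_sub, Pi.sub_apply, hL, hfs]
      have htail := tail1_le (f (u (φ k)) - v)
      rw [hsplit, e0, e1, etail]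
      linarith
    · have h0 : Tendsto (fun k => u (φ k) 0 - a) atTop (𝓝 0) := by
        have := ha.comp hφ₃.tendsto_atTop
        have h := this.sub_const a
        simpa [Function.comp, hφdef] using h
      have h1 : Tendsto (fun k => u (φ k) 1 - b) atTop (𝓝 0) := by
        have h := hb.sub_const b
        simpa [Function.comp, hφdef] using h
      have h2 : Tendsto (fun k => ‖f (u (φ k)) - v‖) atTop (𝓝 0) :=
        tendsto_iff_norm_sub_tendsto_zero.1 hfuv
      have := ((h0.pow 2).add (h1.pow 2)).add (h2.pow 2)
      simpa using this
  refine ⟨L, ?_, φ, hφ, hconv⟩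
  have : f L = v := tendsto_nhds_unique ((hcont.tendsto L).comp hconv) hfuv
  simpa [Set.mem_preimage, this] using hvK
end

section
/- Let h₀ = p₀ ∘ g₀ : ℂ² → ℂ × ℝ, where g₀(z₁,z₂) = (2 z₁ conj(z₂), |z₁|² − |z₂|²) and p₀(z,t) = (z, t²). Then the preimage h₀⁻¹(0,1) (identifying ℂ×ℝ ≅ ℝ³ and the point (0,0,1)) equals the union of the two circles {(z₁,0) : |z₁| = 1} and {(0,z₂) : |z₂| = 1} in ℂ². -/
/-- For `h₀ = p₀ ∘ g₀ : ℂ² → ℂ × ℝ`, with `g₀(z₁,z₂) = (2 z₁ conj z₂, |z₁|² − |z₂|²)`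
and `p₀(z,t) = (z,t²)`, the preimage of `(0,0,1) ∈ ℝ³ ≅ ℂ × ℝ` is the union of the
two circles `{(z₁,0) : |z₁| = 1}` and `{(0,z₂) : |z₂| = 1}` in `ℂ²`. -/
theorem stmt5 :
    (fun p : ℂ × ℂ =>
        ((2 * p.1 * (starRingEnd ℂ) p.2,
          (‖p.1‖ ^ 2 - ‖p.2‖ ^ 2) ^ 2) : ℂ × ℝ))
      ⁻¹' {((0 : ℂ), (1 : ℝ))} =
    {p : ℂ × ℂ | ‖p.1‖ = 1 ∧ p.2 = 0} ∪
      {p : ℂ × ℂ | p.1 = 0 ∧ ‖p.2‖ = 1} := by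
  ext ⟨z₁, z₂⟩
  simp only [Set.mem_preimage, Set.mem_singleton_iff, Prod.mk.injEq, Set.mem_union,
    Set.mem_setOf_eq, mul_eq_zero, map_eq_zero]
  constructor
  · rintro ⟨h1, h2⟩
    rcases h1 with (h | h) | h
    · norm_num at h
    · right
      refine ⟨h, ?_⟩
      rw [h] at h2
      simp at h2
      rcases h2 with (h2 | h2) | h2
      · exact h2
      · nlinarith [norm_nonneg z₂]
      · nlinarith [sq_nonneg (‖z₂‖)]
    · left
      refine ⟨?_, h⟩
      rw [h] at h2
      simp at h2
      rcases h2 with (h2 | h2) | h2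
      · exact h2
      · nlinarith [norm_nonneg z₁]
      · nlinarith [sq_nonneg (‖z₁‖)]
  · rintro (⟨h1, h2⟩ | ⟨h1, h2⟩)
    · subst h2; simp [h1]
    · subst h1; simp [h2]
end

section
/- Let H₀ be a finite-dimensional subspace of a Hilbert space H with orthogonal complement H₀', let H₁ be a finite-dimensional subspace of H with complement H₁', and let D₀ : H₀' → H₁' be an isomorphism. Then the set U of bounded operators F : H₀ ⊕ H₀' → H₁ ⊕ H₁' whose lower-right block D : H₀' → H₁' is an isomorphism is open in the space of bounded operators, and every F ∈ U is Fredholm of index dim H₀ − dim H₁. -/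
universe u


section Aux
variable {R M N : Type*} [Ring R] [AddCommGroup M] [Module R M] [AddCommGroup N] [Module R N]

def auxProdEquiv (p : Submodule R M) (q : Submodule R N) : (p.prod q) ≃ₗ[R] p × q where
  toFun x := (⟨x.val.1, x.prop.1⟩, ⟨x.val.2, x.prop.2⟩)
  invFun x := ⟨(x.1.val, x.2.val), ⟨x.1.prop, x.2.prop⟩⟩
  map_add' _ _ := rfl
  map_smul' _ _ := rfl
  left_inv _ := rfl
  right_inv _ := rfl

noncomputable def auxQuotProdEquiv (p : Submodule R M) (q : Submodule R N) :
    ((M × N) ⧸ p.prod q) ≃ₗ[R] (M ⧸ p) × (N ⧸ q) :=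
  (Submodule.quotEquivOfEq (p.prod q) (LinearMap.ker (p.mkQ.prodMap q.mkQ))
    (by rw [LinearMap.ker_prodMap, Submodule.ker_mkQ, Submodule.ker_mkQ])).trans
  ((p.mkQ.prodMap q.mkQ).quotKerEquivOfSurjective (fun z => by
      obtain ⟨a, ha⟩ := p.mkQ_surjective z.1
      obtain ⟨b, hb⟩ := q.mkQ_surjective z.2
      exact ⟨(a, b), Prod.ext ha hb⟩))
end Aux

theorem aux_fredholm {H₀ H₀' H₁ H₁' : Type u}
    [NormedAddCommGroup H₀] [InnerProductSpace ℝ H₀] [FiniteDimensional ℝ H₀]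
    [NormedAddCommGroup H₀'] [InnerProductSpace ℝ H₀'] [CompleteSpace H₀']
    [NormedAddCommGroup H₁] [InnerProductSpace ℝ H₁] [FiniteDimensional ℝ H₁]
    [NormedAddCommGroup H₁'] [InnerProductSpace ℝ H₁'] [CompleteSpace H₁']
    (F : (H₀ × H₀') →L[ℝ] (H₁ × H₁')) (e : H₀' ≃L[ℝ] H₁')
    (he : (e : H₀' →L[ℝ] H₁') =
      (ContinuousLinearMap.snd ℝ H₁ H₁').comp (F.comp (ContinuousLinearMap.inr ℝ H₀ H₀'))) :
    FiniteDimensional ℝ (LinearMap.ker (F : (H₀ × H₀') →ₗ[ℝ] (H₁ × H₁'))) ∧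
      IsClosed (LinearMap.range (F : (H₀ × H₀') →ₗ[ℝ] (H₁ × H₁')) : Set (H₁ × H₁')) ∧
      FiniteDimensional ℝ ((H₁ × H₁') ⧸ LinearMap.range (F : (H₀ × H₀') →ₗ[ℝ] (H₁ × H₁'))) ∧
      (Module.finrank ℝ (LinearMap.ker (F : (H₀ × H₀') →ₗ[ℝ] (H₁ × H₁'))) : ℤ) -
        (Module.finrank ℝ ((H₁ × H₁') ⧸ LinearMap.range (F : (H₀ × H₀') →ₗ[ℝ] (H₁ × H₁'))) : ℤ) =
      (Module.finrank ℝ H₀ : ℤ) - (Module.finrank ℝ H₁ : ℤ) := by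
  set A : H₀ →L[ℝ] H₁ :=
    (ContinuousLinearMap.fst ℝ H₁ H₁').comp (F.comp (ContinuousLinearMap.inl ℝ H₀ H₀')) with hA
  set B : H₀' →L[ℝ] H₁ :=
    (ContinuousLinearMap.fst ℝ H₁ H₁').comp (F.comp (ContinuousLinearMap.inr ℝ H₀ H₀')) with hB
  set C : H₀ →L[ℝ] H₁' :=
    (ContinuousLinearMap.snd ℝ H₁ H₁').comp (F.comp (ContinuousLinearMap.inl ℝ H₀ H₀')) with hC
  set Ec : H₁' →L[ℝ] H₀' := (e.symm : H₁' →L[ℝ] H₀') with hEc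
  have hFapp : ∀ x : H₀ × H₀', F x = (A x.1 + B x.2, C x.1 + e x.2) := by
    rintro ⟨x, y⟩
    have hx : ((x, y) : H₀ × H₀') = (x, 0) + (0, y) := by simp
    have h1 : F (x, 0) = (A x, C x) := by
      exact Prod.ext rfl rfl
    have h2 : F (0, y) = (B y, e y) := by
      have h := ContinuousLinearMap.ext_iff.mp he y
      exact Prod.ext rfl h.symm
    rw [hx, map_add, h1, h2]
    simp [Prod.ext_iff]
  set S : H₀ →L[ℝ] H₁ := A - B.comp (Ec.comp C) with hS
  -- the shear equivalences
  set Rf : (H₀ × H₀') →L[ℝ] (H₀ × H₀') := (ContinuousLinearMap.fst ℝ H₀ H₀').prod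
    ((ContinuousLinearMap.snd ℝ H₀ H₀') - (Ec.comp C).comp (ContinuousLinearMap.fst ℝ H₀ H₀'))
    with hRf
  set Rg : (H₀ × H₀') →L[ℝ] (H₀ × H₀') := (ContinuousLinearMap.fst ℝ H₀ H₀').prod
    ((ContinuousLinearMap.snd ℝ H₀ H₀') + (Ec.comp C).comp (ContinuousLinearMap.fst ℝ H₀ H₀'))
    with hRg
  set R : (H₀ × H₀') ≃L[ℝ] (H₀ × H₀') := ContinuousLinearEquiv.equivOfInverse Rf Rg
    (fun v => by simp [hRf, hRg]) (fun v => by simp [hRf, hRg]) with hR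
  set Lf : (H₁ × H₁') →L[ℝ] (H₁ × H₁') := ((ContinuousLinearMap.fst ℝ H₁ H₁') -
      (B.comp Ec).comp (ContinuousLinearMap.snd ℝ H₁ H₁')).prod (ContinuousLinearMap.snd ℝ H₁ H₁')
    with hLf
  set Lg : (H₁ × H₁') →L[ℝ] (H₁ × H₁') := ((ContinuousLinearMap.fst ℝ H₁ H₁') +
      (B.comp Ec).comp (ContinuousLinearMap.snd ℝ H₁ H₁')).prod (ContinuousLinearMap.snd ℝ H₁ H₁')
    with hLg
  set L : (H₁ × H₁') ≃L[ℝ] (H₁ × H₁') := ContinuousLinearEquiv.equivOfInverse Lf Lg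
    (fun v => by simp [hLf, hLg]) (fun v => by simp [hLf, hLg]) with hL
  set G : (H₀ × H₀') →L[ℝ] (H₁ × H₁') := S.prodMap (e : H₀' →L[ℝ] H₁') with hG
  have hRapp : ∀ v : H₀ × H₀', R v = (v.1, v.2 - Ec (C v.1)) := fun v => rfl
  have hLapp : ∀ v : H₁ × H₁', L v = (v.1 - B (Ec v.2), v.2) := fun v => rfl
  have hGL : ∀ v : H₀ × H₀', G v = L (F (R v)) := by
    rintro ⟨x, y⟩
    rw [hRapp, hFapp]
    dsimp only
    have key : C x + e (y - Ec (C x)) = e y := by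
      simp [hEc, map_sub]
    rw [key, hLapp]
    dsimp only
    have key2 : Ec (e y) = y := by simp [hEc]
    rw [key2]
    have hGxy : G (x, y) = (S x, e y) := rfl
    rw [hGxy]
    refine Prod.ext ?_ rfl
    show S x = A x + B (y - Ec (C x)) - B y
    simp only [hS, ContinuousLinearMap.sub_apply, ContinuousLinearMap.coe_comp',
      Function.comp_apply, map_sub]
    abel
  have hFeq : ∀ v : H₀ × H₀', F v = L.symm (G (R.symm v)) := by
    intro v
    have h := hGL (R.symm v)
    rw [R.apply_symm_apply] at h
    rw [h, L.symm_apply_apply]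
  -- kernel
  have hker : LinearMap.ker (F : (H₀ × H₀') →ₗ[ℝ] (H₁ × H₁')) =
      (LinearMap.ker (G : (H₀ × H₀') →ₗ[ℝ] (H₁ × H₁'))).map (R.toLinearEquiv : (H₀ × H₀') →ₗ[ℝ] (H₀ × H₀')) := by
    rw [Submodule.map_equiv_eq_comap_symm]
    ext v
    simp only [LinearMap.mem_ker, Submodule.mem_comap]
    simp only [ContinuousLinearMap.coe_coe]
    rw [hFeq v, show (R.toLinearEquiv.symm : (H₀ × H₀') →ₗ[ℝ] (H₀ × H₀')) v = R.symm v from rfl]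
    exact ContinuousLinearEquiv.map_eq_zero_iff L.symm
  have hkerG : LinearMap.ker (G : (H₀ × H₀') →ₗ[ℝ] (H₁ × H₁')) = (LinearMap.ker (S : H₀ →ₗ[ℝ] H₁)).prod ⊥ := by
    ext ⟨x, y⟩
    have hGxy : G (x, y) = (S x, e y) := rfl
    simp [LinearMap.mem_ker, Submodule.mem_prod, hGxy, Prod.ext_iff,
      ContinuousLinearEquiv.map_eq_zero_iff]
  have kerEquiv : LinearMap.ker (F : (H₀ × H₀') →ₗ[ℝ] (H₁ × H₁')) ≃ₗ[ℝ] (LinearMap.ker (S : H₀ →ₗ[ℝ] H₁)) × (⊥ : Submodule ℝ H₀') := by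
    rw [hker, hkerG]
    exact ((R.toLinearEquiv.submoduleMap _).symm).trans (auxProdEquiv _ _)
  haveI hfin₁ : FiniteDimensional ℝ (LinearMap.ker (F : (H₀ × H₀') →ₗ[ℝ] (H₁ × H₁'))) :=
    Module.Finite.equiv kerEquiv.symm
  -- range
  have hrange : LinearMap.range (F : (H₀ × H₀') →ₗ[ℝ] (H₁ × H₁')) =
      (LinearMap.range (G : (H₀ × H₀') →ₗ[ℝ] (H₁ × H₁'))).map (L.symm.toLinearEquiv : (H₁ × H₁') →ₗ[ℝ] (H₁ × H₁')) := by
    ext w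
    simp only [LinearMap.mem_range, Submodule.mem_map, ContinuousLinearEquiv.coe_toLinearEquiv]
    constructor
    · rintro ⟨v, rfl⟩
      exact ⟨G (R.symm v), ⟨R.symm v, rfl⟩, (hFeq v).symm⟩
    · rintro ⟨w', ⟨v, rfl⟩, rfl⟩
      refine ⟨R v, ?_⟩
      simp only [ContinuousLinearMap.coe_coe]
      rw [hFeq (R v), R.symm_apply_apply]
      rfl
  have hrangeG : LinearMap.range (G : (H₀ × H₀') →ₗ[ℝ] (H₁ × H₁')) = (LinearMap.range (S : H₀ →ₗ[ℝ] H₁)).prod ⊤ := by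
    ext ⟨a, b⟩
    simp only [LinearMap.mem_range, Submodule.mem_prod, Submodule.mem_top, and_true]
    constructor
    · rintro ⟨⟨x, y⟩, h⟩
      exact ⟨x, congrArg Prod.fst h⟩
    · rintro ⟨x, hx⟩
      refine ⟨(x, e.symm b), ?_⟩
      have : G (x, e.symm b) = (S x, e (e.symm b)) := rfl
      rw [ContinuousLinearMap.coe_coe, this, e.apply_symm_apply, ← hx]
      rfl
  have hclosedG : IsClosed ((LinearMap.range (G : (H₀ × H₀') →ₗ[ℝ] (H₁ × H₁')) : Submodule ℝ (H₁ × H₁')) : Set (H₁ × H₁')) := by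
    rw [hrangeG]
    have hset : (((LinearMap.range (S : H₀ →ₗ[ℝ] H₁)).prod ⊤ : Submodule ℝ (H₁ × H₁')) : Set (H₁ × H₁')) =
        (LinearMap.range (S : H₀ →ₗ[ℝ] H₁) : Set H₁) ×ˢ (Set.univ : Set H₁') := by
      ext ⟨a, b⟩; simp [Submodule.mem_prod]
    rw [hset]
    exact ((LinearMap.range (S : H₀ →ₗ[ℝ] H₁)).closed_of_finiteDimensional).prod isClosed_univ
  have hclosed : IsClosed (LinearMap.range (F : (H₀ × H₀') →ₗ[ℝ] (H₁ × H₁')) : Set (H₁ × H₁')) := by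
    rw [hrange]
    have : ((Submodule.map (L.symm.toLinearEquiv : (H₁ × H₁') →ₗ[ℝ] (H₁ × H₁'))
        (LinearMap.range (G : (H₀ × H₀') →ₗ[ℝ] (H₁ × H₁'))) : Submodule ℝ (H₁ × H₁')) : Set (H₁ × H₁')) =
        (L.symm : (H₁ × H₁') → (H₁ × H₁')) '' (LinearMap.range (G : (H₀ × H₀') →ₗ[ℝ] (H₁ × H₁')) : Set (H₁ × H₁')) := by
      rw [Submodule.map_coe]; rfl
    rw [this]
    exact (L.symm.toHomeomorph.isClosedMap) _ hclosedG
  -- cokernel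
  have qe : ((H₁ × H₁') ⧸ LinearMap.range (G : (H₀ × H₀') →ₗ[ℝ] (H₁ × H₁'))) ≃ₗ[ℝ] ((H₁ × H₁') ⧸ LinearMap.range (F : (H₀ × H₀') →ₗ[ℝ] (H₁ × H₁'))) :=
    Submodule.Quotient.equiv (LinearMap.range (G : (H₀ × H₀') →ₗ[ℝ] (H₁ × H₁'))) (LinearMap.range (F : (H₀ × H₀') →ₗ[ℝ] (H₁ × H₁'))) L.symm.toLinearEquiv
      (by rw [hrange])
  have quotG : ((H₁ × H₁') ⧸ LinearMap.range (G : (H₀ × H₀') →ₗ[ℝ] (H₁ × H₁'))) ≃ₗ[ℝ]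
      (H₁ ⧸ LinearMap.range (S : H₀ →ₗ[ℝ] H₁)) × (H₁' ⧸ (⊤ : Submodule ℝ H₁')) := by
    rw [hrangeG]
    exact auxQuotProdEquiv _ _
  have cokerEquiv : ((H₁ × H₁') ⧸ LinearMap.range (F : (H₀ × H₀') →ₗ[ℝ] (H₁ × H₁'))) ≃ₗ[ℝ]
      (H₁ ⧸ LinearMap.range (S : H₀ →ₗ[ℝ] H₁)) × (H₁' ⧸ (⊤ : Submodule ℝ H₁')) := qe.symm.trans quotG
  haveI : Subsingleton (H₁' ⧸ (⊤ : Submodule ℝ H₁')) :=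
    Submodule.Quotient.subsingleton_iff.mpr rfl
  haveI : FiniteDimensional ℝ (H₁' ⧸ (⊤ : Submodule ℝ H₁')) := Module.Finite.of_basis (Module.Basis.empty (ι := Fin 0) _)
  haveI hfin₂ : FiniteDimensional ℝ ((H₁ × H₁') ⧸ LinearMap.range (F : (H₀ × H₀') →ₗ[ℝ] (H₁ × H₁'))) :=
    Module.Finite.equiv cokerEquiv.symm
  refine ⟨hfin₁, hclosed, hfin₂, ?_⟩
  -- index computation
  have hk : Module.finrank ℝ (LinearMap.ker (F : (H₀ × H₀') →ₗ[ℝ] (H₁ × H₁'))) = Module.finrank ℝ (LinearMap.ker (S : H₀ →ₗ[ℝ] H₁)) := by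
    rw [kerEquiv.finrank_eq, Module.finrank_prod, finrank_bot, add_zero]
  have hc : Module.finrank ℝ ((H₁ × H₁') ⧸ LinearMap.range (F : (H₀ × H₀') →ₗ[ℝ] (H₁ × H₁'))) =
      Module.finrank ℝ (H₁ ⧸ LinearMap.range (S : H₀ →ₗ[ℝ] H₁)) := by
    rw [cokerEquiv.finrank_eq, Module.finrank_prod,
      Module.finrank_zero_of_subsingleton (M := H₁' ⧸ (⊤ : Submodule ℝ H₁')), add_zero]
  have hq : Module.finrank ℝ (H₁ ⧸ LinearMap.range (S : H₀ →ₗ[ℝ] H₁)) +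
      Module.finrank ℝ (LinearMap.range (S : H₀ →ₗ[ℝ] H₁)) = Module.finrank ℝ H₁ :=
    Submodule.finrank_quotient_add_finrank _
  have hr : Module.finrank ℝ (LinearMap.range (S : H₀ →ₗ[ℝ] H₁)) +
      Module.finrank ℝ (LinearMap.ker (S : H₀ →ₗ[ℝ] H₁)) = Module.finrank ℝ H₀ :=
    LinearMap.finrank_range_add_finrank_ker (S : H₀ →ₗ[ℝ] H₁)
  rw [hk, hc]
  omega

/-- Let `H₀, H₁` be finite-dimensional Hilbert spaces, `H₀', H₁'` Hilbert spaces
admitting an isomorphism `D₀ : H₀' → H₁'`. The set `U` of bounded operators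
`F : H₀ ⊕ H₀' → H₁ ⊕ H₁'` whose lower-right block `D` (extracted via the canonical
injections/projections) is an isomorphism is open, and every `F ∈ U` is Fredholm of
index `dim H₀ − dim H₁`. -/
theorem stmt16 {H₀ H₀' H₁ H₁' : Type u}
    [NormedAddCommGroup H₀] [InnerProductSpace ℝ H₀] [FiniteDimensional ℝ H₀]
    [NormedAddCommGroup H₀'] [InnerProductSpace ℝ H₀'] [CompleteSpace H₀']
    [NormedAddCommGroup H₁] [InnerProductSpace ℝ H₁] [FiniteDimensional ℝ H₁]
    [NormedAddCommGroup H₁'] [InnerProductSpace ℝ H₁'] [CompleteSpace H₁']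
    (D₀ : H₀' ≃L[ℝ] H₁')
    (U : Set ((H₀ × H₀') →L[ℝ] (H₁ × H₁'))) (hU : U =
      {F | ∃ e : H₀' ≃L[ℝ] H₁', (e : H₀' →L[ℝ] H₁') =
        (ContinuousLinearMap.snd ℝ H₁ H₁').comp
          (F.comp (ContinuousLinearMap.inr ℝ H₀ H₀'))}) :
    IsOpen U ∧
    ∀ F ∈ U, FiniteDimensional ℝ (LinearMap.ker (F : (H₀ × H₀') →ₗ[ℝ] (H₁ × H₁'))) ∧
      IsClosed (LinearMap.range (F : (H₀ × H₀') →ₗ[ℝ] (H₁ × H₁')) : Set (H₁ × H₁')) ∧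
      FiniteDimensional ℝ ((H₁ × H₁') ⧸ LinearMap.range (F : (H₀ × H₀') →ₗ[ℝ] (H₁ × H₁'))) ∧
      (Module.finrank ℝ (LinearMap.ker (F : (H₀ × H₀') →ₗ[ℝ] (H₁ × H₁'))) : ℤ) -
        (Module.finrank ℝ ((H₁ × H₁') ⧸ LinearMap.range (F : (H₀ × H₀') →ₗ[ℝ] (H₁ × H₁'))) : ℤ) =
      (Module.finrank ℝ H₀ : ℤ) - (Module.finrank ℝ H₁ : ℤ) := by
  constructor
  · rw [hU]
    have hset : {F : (H₀ × H₀') →L[ℝ] (H₁ × H₁') | ∃ e : H₀' ≃L[ℝ] H₁', (e : H₀' →L[ℝ] H₁') =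
        (ContinuousLinearMap.snd ℝ H₁ H₁').comp (F.comp (ContinuousLinearMap.inr ℝ H₀ H₀'))} =
      (fun F : (H₀ × H₀') →L[ℝ] (H₁ × H₁') =>
        (ContinuousLinearMap.snd ℝ H₁ H₁').comp (F.comp (ContinuousLinearMap.inr ℝ H₀ H₀'))) ⁻¹'
        (Set.range ((↑) : (H₀' ≃L[ℝ] H₁') → (H₀' →L[ℝ] H₁'))) := rfl
    rw [hset]
    refine ContinuousLinearEquiv.isOpen.preimage ?_
    exact (continuous_id.clm_comp_const (ContinuousLinearMap.inr ℝ H₀ H₀')).const_clm_comp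
      (ContinuousLinearMap.snd ℝ H₁ H₁')
  · intro F hF
    rw [hU] at hF
    obtain ⟨e, he⟩ := hF
    exact aux_fredholm F e he
end

section
/- Consider the path of operators F : [0,π/2] → L(ℓ²) given by F(t)(v₁,v₂,v₃,v₄,v₅,...) = (2(v₁ sin t + v₃ cos t), 2(v₂ sin t − v₄ cos t), 4(v₁ cos t − v₃ sin t) cos 2t, v₅, v₆, ...). Then for every t ∈ [0,π/2] with t ≠ π/4, the kernel of F(t) has dimension one, and for t = π/4 the kernel of F(t) has dimension two. -/
open Real

/-- For the path of operators `F : [0,π/2] → L(ℓ²)` given by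
`F(t)(v₁,v₂,v₃,v₄,v₅,…) = (2(v₁ sin t + v₃ cos t), 2(v₂ sin t − v₄ cos t),
4(v₁ cos t − v₃ sin t) cos 2t, v₅, v₆, …)`, the kernel of `F(t)` is one-dimensional
for `t ∈ [0,π/2] \ {π/4}` and two-dimensional for `t = π/4`. -/
theorem stmt19 (F : ℝ → lp (fun _ : ℕ => ℝ) 2 →L[ℝ] lp (fun _ : ℕ => ℝ) 2)
    (hF0 : ∀ t : ℝ, ∀ v : lp (fun _ : ℕ => ℝ) 2,
      F t v 0 = 2 * (v 0 * sin t + v 2 * cos t))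
    (hF1 : ∀ t : ℝ, ∀ v : lp (fun _ : ℕ => ℝ) 2,
      F t v 1 = 2 * (v 1 * sin t - v 3 * cos t))
    (hF2 : ∀ t : ℝ, ∀ v : lp (fun _ : ℕ => ℝ) 2,
      F t v 2 = 4 * (v 0 * cos t - v 2 * sin t) * cos (2 * t))
    (hFs : ∀ t : ℝ, ∀ v : lp (fun _ : ℕ => ℝ) 2, ∀ n : ℕ,
      F t v (n + 3) = v (n + 4)) :
    ∀ t ∈ Set.Icc (0 : ℝ) (π / 2),
      (t ≠ π / 4 → Module.finrank ℝ (LinearMap.ker (F t).toLinearMap) = 1) ∧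
      (t = π / 4 → Module.finrank ℝ (LinearMap.ker (F t).toLinearMap) = 2) := by
  intro t ht
  have hpi := Real.pi_pos
  have hpyth := Real.sin_sq_add_cos_sq t
  -- characterization of the kernel
  have hker : ∀ v : lp (fun _ : ℕ => ℝ) 2, v ∈ LinearMap.ker (F t).toLinearMap ↔
      (v 0 * sin t + v 2 * cos t = 0 ∧ v 1 * sin t - v 3 * cos t = 0 ∧
       (v 0 * cos t - v 2 * sin t) * cos (2 * t) = 0 ∧ ∀ n : ℕ, v (n + 4) = 0) := by
    intro v
    rw [LinearMap.mem_ker, ContinuousLinearMap.coe_coe]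
    constructor
    · intro hv
      have hv' : ∀ n : ℕ, F t v n = 0 := by
        intro n
        have : ((F t v : lp (fun _ : ℕ => ℝ) 2) : ℕ → ℝ) n = ((0 : lp (fun _ : ℕ => ℝ) 2) : ℕ → ℝ) n := by
          rw [show (F t v : lp (fun _ : ℕ => ℝ) 2) = 0 from hv]
        simpa using this
      refine ⟨?_, ?_, ?_, ?_⟩
      · have := hv' 0; rw [hF0] at this; linarith
      · have := hv' 1; rw [hF1] at this; linarith
      · have := hv' 2; rw [hF2] at this; linarith
      · intro n; have := hv' (n + 3); rw [hFs] at this; exact this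
    · rintro ⟨h0, h1, h2, hs⟩
      apply lp.ext
      funext n
      have hn0 : ((0 : lp (fun _ : ℕ => ℝ) 2) : ℕ → ℝ) n = 0 := rfl
      rw [hn0]
      rcases n with _ | _ | _ | _ | n
      · rw [hF0 t v, h0, mul_zero]
      · rw [hF1 t v, h1, mul_zero]
      · rw [hF2 t v]
        have h2 : (v 0 * cos t - v 2 * sin t) * cos (2 * t) = 0 := h2
        linear_combination 4 * h2
      · exact (hFs t v 0).trans (hs 0)
      · exact (hFs t v (n + 1)).trans (hs (n + 1))
  constructor
  · -- generic case
    intro htne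
    have hc2 : cos (2 * t) ≠ 0 := by
      intro hc
      rcases Real.cos_eq_zero_iff.1 hc with ⟨k, hk⟩
      have hk0 : (0 : ℝ) ≤ 2 * (k : ℝ) + 1 := by nlinarith [ht.1, ht.2]
      have hk2 : 2 * (k : ℝ) + 1 ≤ 2 := by nlinarith [ht.1, ht.2]
      have hkz : k = 0 := by
        have h1 : (0 : ℤ) ≤ 2 * k + 1 := by exact_mod_cast hk0
        have h2 : 2 * k + 1 ≤ 2 := by exact_mod_cast hk2
        omega
      rw [hkz] at hk
      apply htne
      push_cast at hk
      linarith
    set w : lp (fun _ : ℕ => ℝ) 2 := lp.single 2 1 (cos t) + lp.single 2 3 (sin t) with hw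
    have hw0 : (w : ℕ → ℝ) 0 = 0 := by
      rw [hw, lp.coeFn_add]
      simp [lp.single_apply]
    have hw1 : (w : ℕ → ℝ) 1 = cos t := by
      rw [hw, lp.coeFn_add]
      simp [lp.single_apply]
    have hw2 : (w : ℕ → ℝ) 2 = 0 := by
      rw [hw, lp.coeFn_add]
      simp [lp.single_apply]
    have hw3 : (w : ℕ → ℝ) 3 = sin t := by
      rw [hw, lp.coeFn_add]
      simp [lp.single_apply]
    have hws : ∀ n : ℕ, (w : ℕ → ℝ) (n + 4) = 0 := by
      intro n
      rw [hw, lp.coeFn_add]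
      have e1 : ¬(n + 4 = 1) := by omega
      have e3 : ¬(n + 4 = 3) := by omega
      rw [Pi.add_apply, lp.single_apply, lp.single_apply, Pi.single_apply, Pi.single_apply, if_neg e1, if_neg e3, add_zero]
    have hwne : w ≠ 0 := by
      intro h
      have h1 : (w : ℕ → ℝ) 1 = 0 := by rw [h]; rfl
      have h3 : (w : ℕ → ℝ) 3 = 0 := by rw [h]; rfl
      rw [hw1] at h1; rw [hw3] at h3
      nlinarith
    have hkereq : LinearMap.ker (F t).toLinearMap = Submodule.span ℝ {w} := by
      apply le_antisymm
      · intro v hv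
        rw [hker] at hv
        obtain ⟨h0, h1, h2, hs⟩ := hv
        have h2' : v 0 * cos t - v 2 * sin t = 0 := by
          rcases mul_eq_zero.1 h2 with h | h
          · exact h
          · exact absurd h hc2
        have hv0 : v 0 = 0 := by
          linear_combination sin t * h0 + cos t * h2' - v 0 * hpyth
        have hv2 : v 2 = 0 := by
          linear_combination cos t * h0 - sin t * h2' - v 2 * hpyth
        rw [Submodule.mem_span_singleton]
        refine ⟨v 1 * cos t + v 3 * sin t, ?_⟩
        apply lp.ext
        funext n
        have hsm : (((v 1 * cos t + v 3 * sin t) • w : lp (fun _ : ℕ => ℝ) 2) : ℕ → ℝ) n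
            = (v 1 * cos t + v 3 * sin t) * (w : ℕ → ℝ) n := by
          rw [lp.coeFn_smul]; rfl
        rw [hsm]
        rcases n with _ | _ | _ | _ | n
        · rw [hw0, mul_zero]; exact hv0.symm
        · rw [hw1]
          linear_combination (v 1 : ℝ) * hpyth - sin t * h1
        · rw [hw2, mul_zero]; exact hv2.symm
        · rw [hw3]
          linear_combination (v 3 : ℝ) * hpyth + cos t * h1
        · rw [show n + 1 + 1 + 1 + 1 = n + 4 from rfl, hws n, mul_zero]; exact (hs n).symm
      · rw [Submodule.span_le, Set.singleton_subset_iff]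
        rw [SetLike.mem_coe, hker]
        refine ⟨?_, ?_, ?_, ?_⟩
        · rw [hw0, hw2]; ring
        · rw [hw1, hw3]; ring
        · rw [hw0, hw2]; ring
        · exact hws
    rw [hkereq]
    exact finrank_span_singleton hwne
  · -- t = π/4
    intro hteq
    subst hteq
    have hs4 : sin (π / 4) = Real.sqrt 2 / 2 := Real.sin_pi_div_four
    have hc4 : cos (π / 4) = Real.sqrt 2 / 2 := Real.cos_pi_div_four
    have hsqrt : (0 : ℝ) < Real.sqrt 2 / 2 := by positivity
    have hcos2 : cos (2 * (π / 4)) = 0 := by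
      rw [show 2 * (π / 4) = π / 2 by ring, Real.cos_pi_div_two]
    set w1 : lp (fun _ : ℕ => ℝ) 2 := lp.single 2 0 1 + lp.single 2 2 (-1) with hwd1
    set w2 : lp (fun _ : ℕ => ℝ) 2 := lp.single 2 1 1 + lp.single 2 3 1 with hwd2
    have hw1c : ∀ n : ℕ, (w1 : ℕ → ℝ) n = if n = 0 then 1 else if n = 2 then -1 else 0 := by
      intro n
      rw [hwd1, lp.coeFn_add, Pi.add_apply, lp.single_apply, lp.single_apply]
      rcases n with _ | _ | _ | n <;> simp
    have hw2c : ∀ n : ℕ, (w2 : ℕ → ℝ) n = if n = 1 then 1 else if n = 3 then 1 else 0 := by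
      intro n
      rw [hwd2, lp.coeFn_add, Pi.add_apply, lp.single_apply, lp.single_apply]
      rcases n with _ | _ | _ | _ | n <;> simp
    have hli : LinearIndependent ℝ ![w1, w2] := by
      rw [LinearIndependent.pair_iff]
      intro a b hab
      have h0 : ∀ n : ℕ, ((a • w1 + b • w2 : lp (fun _ : ℕ => ℝ) 2) : ℕ → ℝ) n = 0 := by
        intro n; rw [hab]; rfl
      have hA := h0 0
      have hB := h0 1
      rw [lp.coeFn_add, Pi.add_apply, lp.coeFn_smul, lp.coeFn_smul, Pi.smul_apply,
        Pi.smul_apply, smul_eq_mul, smul_eq_mul, hw1c, hw2c] at hA hB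
      norm_num at hA hB
      exact ⟨hA, hB⟩
    have hkereq : LinearMap.ker (F (π / 4)).toLinearMap = Submodule.span ℝ (Set.range ![w1, w2]) := by
      have hrange : Set.range ![w1, w2] = {w1, w2} := by
        ext x
        simp [Matrix.range_cons, Matrix.range_empty]
        tauto
      rw [hrange]
      apply le_antisymm
      · intro v hv
        rw [hker] at hv
        obtain ⟨h0, h1, h2, hs⟩ := hv
        rw [hs4, hc4] at h0 h1
        have hv02 : v 2 = -(v 0) := by
          have : (v 0 + v 2) * (Real.sqrt 2 / 2) = 0 := by linarith
          have := mul_eq_zero.1 this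
          rcases this with h | h
          · linarith
          · exact absurd h (ne_of_gt hsqrt)
        have hv13 : v 3 = v 1 := by
          have : (v 1 - v 3) * (Real.sqrt 2 / 2) = 0 := by linarith
          rcases mul_eq_zero.1 this with h | h
          · linarith
          · exact absurd h (ne_of_gt hsqrt)
        rw [Submodule.mem_span_pair]
        refine ⟨v 0, v 1, ?_⟩
        apply lp.ext
        funext n
        have hsm : (((v 0) • w1 + (v 1) • w2 : lp (fun _ : ℕ => ℝ) 2) : ℕ → ℝ) n
            = v 0 * (w1 : ℕ → ℝ) n + v 1 * (w2 : ℕ → ℝ) n := by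
          rw [lp.coeFn_add, Pi.add_apply, lp.coeFn_smul, lp.coeFn_smul]; rfl
        rw [hsm, hw1c, hw2c]
        rcases n with _ | _ | _ | _ | n
        · norm_num
        · norm_num
        · norm_num; linarith [hv02]
        · norm_num; linarith [hv13]
        · rw [show n + 1 + 1 + 1 + 1 = n + 4 from rfl]
          have e0 : ¬(n + 4 = 0) := by omega
          have e1 : ¬(n + 4 = 1) := by omega
          have e2 : ¬(n + 4 = 2) := by omega
          have e3 : ¬(n + 4 = 3) := by omega
          rw [if_neg e0, if_neg e1, if_neg e2, if_neg e3, hs n]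
          ring
      · rw [Submodule.span_le]
        intro x hx
        rcases hx with h | h
        · rw [SetLike.mem_coe, h, hker]
          refine ⟨?_, ?_, ?_, ?_⟩
          · rw [hw1c 0, hw1c 2]; norm_num
          · rw [hw1c 1, hw1c 3]; norm_num
          · rw [hcos2]; ring
          · intro n; rw [hw1c (n + 4)]
            have e0 : (n + 4 : ℕ) ≠ 0 := by omega
            have e2 : (n + 4 : ℕ) ≠ 2 := by omega
            rw [if_neg e0, if_neg e2]
        · rw [Set.mem_singleton_iff] at h
          rw [SetLike.mem_coe, h, hker]
          refine ⟨?_, ?_, ?_, ?_⟩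
          · rw [hw2c 0, hw2c 2]; norm_num
          · rw [hw2c 1, hw2c 3]; norm_num
          · rw [hcos2]; ring
          · intro n; rw [hw2c (n + 4)]
            have e1 : (n + 4 : ℕ) ≠ 1 := by omega
            have e3 : (n + 4 : ℕ) ≠ 3 := by omega
            rw [if_neg e1, if_neg e3]
    rw [hkereq, finrank_span_eq_card hli]
    simp
end
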